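/- Let F₁, F₂ : A → B be lenses and let E : B → C be a lens with E ∘ F₁ = E ∘ F₂ in Lens such that the get functor U E coequalises U F₁ and U F₂ in Cat. If U E is a discrete opfibration, then E coequalises F₁ and F₂ in the category Lens. -/

import Mathlib

universe u

open CategoryTheory CategoryTheory.Limits

namespace LensPaper

section OutDefs

variable {A : Type*} [Category A] {B : Type*} [Category B] {C : Type*} [Category C]

/-- The "out-set" of an object: the collection of all morphisms out of `X`,
bundled with their targets. -/
def Out (X : A) : Type _ := Σ Y : A, X ⟶ Y

/-- The identity element of an out-set. -/
def Out.id (X : A) : Out X := ⟨X, 𝟙 X⟩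

/-- Composition of a morphism out of `X` with a morphism out of its target. -/
def Out.comp {X : A} (u : Out X) (v : Out u.1) : Out X := ⟨v.1, u.2 ≫ v.2⟩

/-- Transport of out-sets along an equality of objects. -/
def Out.cast {X Y : A} (h : X = Y) (u : Out X) : Out Y := ⟨u.1, eqToHom h.symm ≫ u.2⟩

@[simp] theorem Out.cast_rfl {X : A} (u : Out X) : Out.cast rfl u = u := by
  cases u; simp [Out.cast]; rfl

theorem Out.cast_cast {X Y Z : A} (h₁ : X = Y) (h₂ : Y = Z) (u : Out X) :
    Out.cast h₂ (Out.cast h₁ u) = Out.cast (h₁.trans h₂) u := by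
  subst h₁; subst h₂; simp

/-- The action of a functor on out-sets. -/
def mapOut (F : A ⥤ B) {X : A} (u : Out X) : Out (F.obj X) := ⟨F.obj u.1, F.map u.2⟩

theorem mapOut_cast (F : A ⥤ B) {X Y : A} (h : X = Y) (u : Out X) :
    mapOut F (Out.cast h u) = Out.cast (congrArg F.obj h) (mapOut F u) := by
  subst h; simp

/-- The set of all morphisms of a category, bundled with their endpoints. -/
def Mor (A : Type*) [Category A] : Type _ := Σ (X Y : A), X ⟶ Y

/-- The action of a functor on morphisms, as a function on bundled morphisms. -/
def mapMor (F : A ⥤ B) : Mor A → Mor B := fun m => ⟨F.obj m.1, F.obj m.2.1, F.map m.2.2⟩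

/-- The set of composable pairs of morphisms of a category. -/
def CompPair (A : Type*) [Category A] : Type _ := Σ (X Y Z : A), (X ⟶ Y) × (Y ⟶ Z)

/-- The action of a functor on composable pairs. -/
def mapCompPair (F : A ⥤ B) : CompPair A → CompPair B :=
  fun p => ⟨F.obj p.1, F.obj p.2.1, F.obj p.2.2.1, (F.map p.2.2.2.1, F.map p.2.2.2.2)⟩

/-- A functor is a discrete opfibration if every morphism out of `F.obj X`
has a unique lift to a morphism out of `X`. -/
def IsDiscreteOpfibration (F : A ⥤ B) : Prop :=
  ∀ (X : A) (u : Out (F.obj X)), ∃! v : Out X, mapOut F v = u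

/-- A cosieve is an injective-on-objects discrete opfibration. -/
def IsCosieve (F : A ⥤ B) : Prop :=
  IsDiscreteOpfibration F ∧ Function.Injective F.obj

end OutDefs

/-- An (asymmetric delta) lens: a get functor together with put functions
satisfying PutGet, PutId and PutPut. -/
structure DLens (A : Type*) (B : Type*) [Category A] [Category B] where
  get : A ⥤ B
  put : ∀ (X : A), Out (get.obj X) → Out X
  putGet : ∀ (X : A) (u : Out (get.obj X)), mapOut get (put X u) = u
  putId : ∀ (X : A), put X (Out.id (get.obj X)) = Out.id X
  putPut : ∀ (X : A) (u : Out (get.obj X)) (v : Out u.1) (h : u.1 = get.obj (put X u).1),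
      put X (u.comp v) = (put X u).comp (put (put X u).1 (Out.cast h v))

namespace DLens

variable {A : Type*} [Category A] {B : Type*} [Category B] {C : Type*} [Category C]

theorem put_cast (F : DLens A B) {X₁ X₂ : A} (e : X₁ = X₂) (u : Out (F.get.obj X₁)) :
    Out.cast e (F.put X₁ u) = F.put X₂ (Out.cast (congrArg F.get.obj e) u) := by
  subst e; simp

/-- The identity lens. -/
def id (A : Type*) [Category A] : DLens A A where
  get := Functor.id A
  put X u := u
  putGet X u := rfl
  putId X := rfl
  putPut X u v h := by
    have hv : Out.cast h v = v := Out.cast_rfl v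
    rw [hv]

/-- Composition of lenses. -/
def comp (F : DLens A B) (G : DLens B C) : DLens A C where
  get := F.get ⋙ G.get
  put X u := F.put X (G.put (F.get.obj X) u)
  putGet X u := by
    show mapOut G.get (mapOut F.get (F.put X (G.put (F.get.obj X) u))) = u
    rw [F.putGet, G.putGet]
  putId X := by
    show F.put X (G.put (F.get.obj X) (Out.id (G.get.obj (F.get.obj X)))) = Out.id X
    rw [G.putId, F.putId]
  putPut X u v h := by
    have h₁ : u.1 = G.get.obj (G.put (F.get.obj X) u).1 :=
      (congrArg Sigma.fst (G.putGet (F.get.obj X) u)).symm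
    show F.put X (G.put (F.get.obj X) (u.comp v)) = _
    rw [G.putPut (F.get.obj X) u v h₁]
    have h₂ : (G.put (F.get.obj X) u).1 =
        F.get.obj (F.put X (G.put (F.get.obj X) u)).1 :=
      (congrArg Sigma.fst (F.putGet X (G.put (F.get.obj X) u))).symm
    rw [F.putPut X (G.put (F.get.obj X) u) _ h₂]
    rw [put_cast G h₂, Out.cast_cast]

end DLens

/-- The category of small categories and (asymmetric delta) lenses. -/
def LensCat : Type (u + 1) := Cat.{u, u}

/-- Regard a small category as an object of the category of lenses. -/
def LensCat.of (C : Cat.{u, u}) : LensCat.{u} := C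

/-- The underlying small category of an object of the category of lenses. -/
def LensCat.toCat (A : LensCat.{u}) : Cat.{u, u} := A

instance : Category.{u} LensCat.{u} where
  Hom A B := DLens A.toCat B.toCat
  id A := DLens.id A.toCat
  comp F G := F.comp G
  id_comp F := rfl
  comp_id F := rfl
  assoc F G H := rfl

/-- The get functor of a lens, i.e. a morphism of `LensCat` regarded as a `DLens`. -/
def LensCat.get {A B : LensCat.{u}} (F : A ⟶ B) : A.toCat ⟶ B.toCat := (DLens.get F).toCatHom

/-- The identity-on-objects forgetful functor from the category of lenses to the
category of small categories and functors, sending a lens to its get functor. -/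
def lensForget : LensCat.{u} ⥤ Cat.{u, u} where
  obj A := A.toCat
  map F := (DLens.get F).toCatHom
  map_id A := rfl
  map_comp F G := rfl

section OutExtra

variable {A : Type*} [Category A] {B : Type*} [Category B] {C : Type*} [Category C]

@[simp] theorem Out.cast_eq {X : A} (h : X = X) (u : Out X) : Out.cast h u = u :=
  Out.cast_rfl u

@[simp] theorem Out.cast_id {X Y : A} (h : X = Y) : Out.cast h (Out.id X) = Out.id Y := by
  subst h; simp

theorem Out.cast_comp {X Y : A} (h : X = Y) (u : Out X) (v : Out u.1) :
    (Out.cast h u).comp v = Out.cast h (u.comp v) := by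
  simp [Out.cast, Out.comp]; rfl

@[simp] theorem mapOut_id (F : A ⥤ B) (X : A) : mapOut F (Out.id X) = Out.id (F.obj X) := by
  simp [mapOut, Out.id]; rfl

theorem mapOut_comp' (F : A ⥤ B) {X : A} (u : Out X) (v : Out u.1) :
    mapOut F (u.comp v) = (mapOut F u).comp (mapOut F v) := by
  simp [mapOut, Out.comp]; rfl

theorem mapOut_mapOut (F : A ⥤ B) (G : B ⥤ C) {X : A} (u : Out X) :
    mapOut G (mapOut F u) = mapOut (F ⋙ G) u := rfl

theorem mapOut_congr {F G : A ⥤ B} (h : F = G) {X : A} (u : Out X) :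
    mapOut G u = Out.cast (Functor.congr_obj h X) (mapOut F u) := by
  subst h; simp

end OutExtra


end LensPaper
open CategoryTheory CategoryTheory.Limits LensPaper
namespace LensProof

open LensPaper

section Gen

variable {A : Type*} [Category A] {B : Type*} [Category B]

theorem put_congr {L₁ L₂ : DLens A B} (h : L₁ = L₂) (X : A) (u : Out (L₁.get.obj X)) :
    L₁.put X u = L₂.put X (Out.cast (Functor.congr_obj (congrArg DLens.get h) X) u) := by
  subst h; simp

theorem put_congr_obj (L : DLens A B) {X₁ X₂ : A} (h : X₁ = X₂) (u : Out (L.get.obj X₂)) :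
    L.put X₂ u = Out.cast h (L.put X₁ (Out.cast (congrArg L.get.obj h).symm u)) := by
  subst h; simp

theorem DLens.ext' {L₁ L₂ : DLens A B} (hget : L₁.get = L₂.get)
    (hput : ∀ (X : A) (u : Out (L₁.get.obj X)),
      L₁.put X u = L₂.put X (Out.cast (Functor.congr_obj hget X) u)) : L₁ = L₂ := by
  obtain ⟨g₁, p₁, _, _, _⟩ := L₁
  obtain ⟨g₂, p₂, _, _, _⟩ := L₂
  dsimp at hget
  subst hget
  have hp : p₁ = p₂ := by
    funext X u
    simpa using hput X u
  subst hp
  rfl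

theorem put_mapOut {L : DLens A B} (h : IsDiscreteOpfibration L.get) (X : A) (w : Out X) :
    L.put X (mapOut L.get w) = w := by
  obtain ⟨v, -, huniq⟩ := h X (mapOut L.get w)
  rw [huniq _ (L.putGet X (mapOut L.get w)), huniq w rfl]

end Gen

-- codiscrete categories
def Codisc (S : Type u) : Type u := S

instance (S : Type u) : Category.{u} (Codisc S) where
  Hom _ _ := PUnit
  id _ := ⟨⟩
  comp _ _ := ⟨⟩

def funToCodisc {B : Type*} [Category B] {S : Type u} (g : B → S) : B ⥤ Codisc S where
  obj := g
  map _ := ⟨⟩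

theorem codisc_funext {B : Type*} [Category B] {S : Type u} {G G' : B ⥤ Codisc S}
    (h : ∀ b, G.obj b = G'.obj b) : G = G' :=
  CategoryTheory.Functor.ext h (fun _ _ _ => rfl)

end LensProof
namespace LensProof

section Factor

variable {A B C : LensCat.{u}} {F1 F2 : A ⟶ B} {E : B ⟶ C}
  {wU : lensForget.map F1 ≫ lensForget.map E = lensForget.map F2 ≫ lensForget.map E}
  (hUE : IsColimit (Cofork.ofπ (lensForget.map E) wU))

include hUE

theorem factor_exists (S : Type u) (g : B.toCat → S)
    (hg : ∀ a : A.toCat, g ((DLens.get F1).obj a) = g ((DLens.get F2).obj a)) :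
    ∃ f : C.toCat → S, ∀ b, f ((DLens.get E).obj b) = g b := by
  let G : B.toCat ⟶ Cat.of (Codisc S) := (funToCodisc g).toCatHom
  have hG : lensForget.map F1 ≫ G = lensForget.map F2 ≫ G := Cat.ext (codisc_funext hg)
  refine ⟨(Cofork.IsColimit.desc hUE G hG).toFunctor.obj, fun b => ?_⟩
  exact Functor.congr_obj (congrArg Cat.Hom.toFunctor (Cofork.IsColimit.π_desc' hUE G hG)) b

theorem factor_unique {S : Type u} (f f' : C.toCat → S)
    (h : ∀ b, f ((DLens.get E).obj b) = f' ((DLens.get E).obj b)) : f = f' := by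
  have hGG : ((funToCodisc f).toCatHom : C.toCat ⟶ Cat.of (Codisc S)) = (funToCodisc f').toCatHom :=
    Cofork.IsColimit.hom_ext hUE (Cat.ext (codisc_funext h))
  exact congrArg (fun G => G.toFunctor.obj) hGG

theorem e_surj : ∀ X : C.toCat, ∃ b, (DLens.get E).obj b = X := by
  have hq := factor_unique hUE (fun _ => ULift.up.{u} True)
      (fun X => ULift.up.{u} (∃ b, (DLens.get E).obj b = X))
      (fun b => congrArg ULift.up (propext ⟨fun _ => ⟨b, rfl⟩, fun _ => trivial⟩))
  intro X
  have hX : True = ∃ b, (DLens.get E).obj b = X := congrArg ULift.down (congrFun hq X)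
  exact hX ▸ trivial

end Factor

end LensProof
namespace LensProof

section Sig

variable {C : Type*} [Category C] {D : Type*} [Category D] (H : C ⥤ D)

theorem sig_mk_eq {X X' : C} (hX : X = X')
    (f : Out (H.obj X) → Out X) (f' : Out (H.obj X') → Out X')
    (hf : ∀ u, Out.cast hX (f u) = f' (Out.cast (congrArg H.obj hX) u)) :
    (⟨X, f⟩ : Σ Y : C, (Out (H.obj Y) → Out Y)) = ⟨X', f'⟩ := by
  subst hX
  exact congrArg (Sigma.mk X) (funext fun u => by simpa using hf u)

theorem sig_mk_eq' {X X' : C}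
    (f : Out (H.obj X) → Out X) (f' : Out (H.obj X') → Out X')
    (h : (⟨X, f⟩ : Σ Y : C, (Out (H.obj Y) → Out Y)) = ⟨X', f'⟩) (hX : X = X') :
    ∀ u, Out.cast hX (f u) = f' (Out.cast (congrArg H.obj hX) u) := by
  subst hX
  intro u
  cases h
  simp

theorem mapOut_congr' {A : Type*} [Category A] {F G : A ⥤ C} (h : F = G) {X : A} (u : Out X) :
    mapOut F u = Out.cast (Functor.congr_obj h X).symm (mapOut G u) := by
  subst h; simp

end Sig

section Desc

variable {B : Type*} [Category B] {C : Type*} [Category C] {D : Type*} [Category D]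
variable (EL : DLens B C) (K : DLens B D) (H : C ⥤ D)
variable (sec : C → B)

/-- The object-indexed put data determined by `K` along the fibres of `EL.get`. -/
def gfun (hfac : EL.get ⋙ H = K.get) (b : B) :
    Σ X : C, (Out (H.obj X) → Out X) :=
  ⟨EL.get.obj b, fun u => mapOut EL.get (K.put b (Out.cast (Functor.congr_obj hfac b) u))⟩

variable (hsec : ∀ X, EL.get.obj (sec X) = X)
variable (hfac : EL.get ⋙ H = K.get)
variable (hWD : ∀ (b b' : B), EL.get.obj b = EL.get.obj b' →
  gfun EL K H hfac b = gfun EL K H hfac b')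

include hWD in
/-- pointwise form of well-definedness -/
theorem wd' (b b' : B) (h : EL.get.obj b = EL.get.obj b') (t : Out (H.obj (EL.get.obj b))) :
    Out.cast h (mapOut EL.get (K.put b (Out.cast (Functor.congr_obj hfac b) t))) =
    mapOut EL.get (K.put b' (Out.cast (Functor.congr_obj hfac b')
      (Out.cast (congrArg H.obj h) t))) :=
  sig_mk_eq' H _ _ (hWD b b' h) h t

/-- The put function of the descended lens. -/
def eput (X : C) (u : Out (H.obj X)) : Out X :=
  Out.cast (hsec X) (mapOut EL.get (K.put (sec X)
    (Out.cast (((congrArg H.obj (hsec X)).symm).trans (Functor.congr_obj hfac (sec X))) u)))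

include hWD in
theorem eput_eq (b : B) (u : Out (H.obj (EL.get.obj b))) :
    eput EL K H sec hsec hfac (EL.get.obj b) u =
    mapOut EL.get (K.put b (Out.cast (Functor.congr_obj hfac b) u)) := by
  show Out.cast (hsec (EL.get.obj b)) (mapOut EL.get (K.put (sec (EL.get.obj b))
      (Out.cast _ u))) = _
  rw [← Out.cast_cast (congrArg H.obj (hsec (EL.get.obj b))).symm
      (Functor.congr_obj hfac (sec (EL.get.obj b))) u]
  rw [wd' EL K H hfac hWD (sec (EL.get.obj b)) b (hsec (EL.get.obj b))]
  simp only [Out.cast_cast]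


include hWD in
theorem eput_eq' (X : C) (b : B) (hb : EL.get.obj b = X) (z : Out (H.obj X)) :
    eput EL K H sec hsec hfac X z =
    Out.cast hb (mapOut EL.get (K.put b
      (Out.cast ((congrArg H.obj hb).symm.trans (Functor.congr_obj hfac b)) z))) := by
  subst hb
  rw [eput_eq EL K H sec hsec hfac hWD]
  simp only [Out.cast_cast, Out.cast_eq]


include hWD in
/-- The descended lens. -/
def descLens : DLens C D where
  get := H
  put := eput EL K H sec hsec hfac
  putGet := by
    intro X u
    simp only [eput]
    rw [mapOut_cast, mapOut_mapOut, mapOut_congr' hfac, K.putGet]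
    simp only [Out.cast_cast, Out.cast_eq]
  putId := by
    intro X
    simp only [eput, Out.cast_id, DLens.putId, mapOut_id]
  putPut := by
    intro X u v h
    rw [eput_eq' EL K H sec hsec hfac hWD
      ((eput EL K H sec hsec hfac X u).1)
      ((K.put (sec X) (Out.cast (((congrArg H.obj (hsec X)).symm).trans
        (Functor.congr_obj hfac (sec X))) u)).1) rfl (Out.cast h v)]
    simp only [eput]
    rw [← Out.cast_comp,
      K.putPut (sec X) (Out.cast (((congrArg H.obj (hsec X)).symm).trans
        (Functor.congr_obj hfac (sec X))) u) v
        ((congrArg Sigma.fst (K.putGet (sec X) _)).symm),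
      mapOut_comp']
    refine (Out.cast_comp _ _ _).symm.trans ?_
    refine congrArg (Out.comp _) ?_
    refine Eq.trans ?_ (Out.cast_rfl _).symm
    congr 2
    exact (Out.cast_cast _ _ _).symm

include hWD in
theorem comp_descLens (hdopf : IsDiscreteOpfibration EL.get) :
    EL.comp (descLens EL K H sec hsec hfac hWD) = K := by
  refine DLens.ext' hfac ?_
  intro b u
  show EL.put b (eput EL K H sec hsec hfac (EL.get.obj b) u) = K.put b (Out.cast _ u)
  rw [eput_eq EL K H sec hsec hfac hWD b u, put_mapOut hdopf]
  rfl

include hWD in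
theorem descLens_uniq (m : DLens C D) (hget : m.get = H) (hm : EL.comp m = K) :
    m = descLens EL K H sec hsec hfac hWD := by
  subst hget
  refine DLens.ext' rfl ?_
  intro X u
  have step2 : ∀ (b : B) (z : Out (m.get.obj (EL.get.obj b))),
      m.put (EL.get.obj b) z =
      mapOut EL.get (K.put b (Out.cast (Functor.congr_obj hfac b) z)) := by
    intro b z
    have hcomp := put_congr hm b (show Out ((EL.comp m).get.obj b) from z)
    have hmap := congrArg (mapOut EL.get) hcomp
    rwa [show (EL.comp m).put b z = EL.put b (m.put (EL.get.obj b) z) from rfl,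
      EL.putGet] at hmap
  rw [put_congr_obj m (hsec X) u, step2]
  show _ = eput EL K m.get sec hsec hfac X _
  simp only [eput, Out.cast_cast, Out.cast_eq]
  congr 3
  exact (Out.cast_cast _ _ _).symm


theorem g_coeq {A : Type*} [Category A] (F1 F2 : DLens A B)
    (hKcomp : F1.comp K = F2.comp K)
    (hwget : F1.get ⋙ EL.get = F2.get ⋙ EL.get) (a : A) :
    gfun EL K H hfac (F1.get.obj a) = gfun EL K H hfac (F2.get.obj a) := by
  refine sig_mk_eq H (Functor.congr_obj hwget a) _ _ (fun u => ?_)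
  have key := put_congr hKcomp a
    (show Out ((F1.comp K).get.obj a) from
      Out.cast (Functor.congr_obj hfac (F1.get.obj a)) u)
  have key2 := congrArg (mapOut (F1.get ⋙ EL.get)) key
  have L1 : mapOut (F1.get ⋙ EL.get)
      ((F1.comp K).put a (Out.cast (Functor.congr_obj hfac (F1.get.obj a)) u)) =
      mapOut EL.get (K.put (F1.get.obj a)
        (Out.cast (Functor.congr_obj hfac (F1.get.obj a)) u)) := by
    show mapOut (F1.get ⋙ EL.get) (F1.put a (K.put (F1.get.obj a) _)) = _
    rw [← mapOut_mapOut, F1.putGet]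
    rfl
  have R0 : mapOut (F2.get ⋙ EL.get)
      ((F2.comp K).put a (Out.cast (Functor.congr_obj (congrArg DLens.get hKcomp) a)
        (Out.cast (Functor.congr_obj hfac (F1.get.obj a)) u))) =
      mapOut EL.get (K.put (F2.get.obj a)
        (Out.cast (Functor.congr_obj (congrArg DLens.get hKcomp) a)
          (Out.cast (Functor.congr_obj hfac (F1.get.obj a)) u))) := by
    show mapOut (F2.get ⋙ EL.get) (F2.put a (K.put (F2.get.obj a) _)) = _
    rw [← mapOut_mapOut, F2.putGet]
    rfl
  have R1 := mapOut_congr hwget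
    ((F2.comp K).put a (Out.cast (Functor.congr_obj (congrArg DLens.get hKcomp) a)
      (Out.cast (Functor.congr_obj hfac (F1.get.obj a)) u)))
  have main := (congrArg (Out.cast (Functor.congr_obj hwget a))
    (L1.symm.trans key2)).trans (R1.symm.trans R0)
  show Out.cast (Functor.congr_obj hwget a)
      (mapOut EL.get (K.put (F1.get.obj a)
        (Out.cast (Functor.congr_obj hfac (F1.get.obj a)) u))) =
    mapOut EL.get (K.put (F2.get.obj a)
      (Out.cast (Functor.congr_obj hfac (F2.get.obj a))
        (Out.cast (congrArg H.obj (Functor.congr_obj hwget a)) u)))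
  refine main.trans ?_
  congr 2
  exact (Out.cast_cast _ _ _).trans (Out.cast_cast _ _ _).symm

end Desc

end LensProof
/-- Let `F1, F2 : A ⟶ B` be lenses and `E : B ⟶ C` a cofork of
them in `Lens` whose get functor coequalises `U F1` and `U F2` in `Cat`. If the
get functor of `E` is a discrete opfibration, then `E` coequalises `F1` and `F2`
in `Lens`. -/
theorem coequaliser_reflected_of_discreteOpfibration (A B C : LensCat.{u})
    (F1 F2 : A ⟶ B) (E : B ⟶ C) (w : F1 ≫ E = F2 ≫ E)
    (wU : lensForget.map F1 ≫ lensForget.map E = lensForget.map F2 ≫ lensForget.map E)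
    (hUE : IsColimit (Cofork.ofπ (lensForget.map E) wU))
    (hdopf : IsDiscreteOpfibration (DLens.get E)) :
    Nonempty (IsColimit (Cofork.ofπ E w)) := by

  choose sec hsec using LensProof.e_surj hUE
  refine ⟨Cofork.IsColimit.ofExistsUnique fun s => ?_⟩
  set K : B ⟶ s.pt := Cofork.π s with hKdef
  have hK : F1 ≫ K = F2 ≫ K := s.condition
  have hKg : lensForget.map F1 ≫ lensForget.map K = lensForget.map F2 ≫ lensForget.map K :=
    congrArg lensForget.map hK
  let H : C.toCat ⥤ s.pt.toCat := (Cofork.IsColimit.desc hUE (lensForget.map K) hKg).toFunctor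
  have hfac : DLens.get E ⋙ H = DLens.get K :=
    congrArg Cat.Hom.toFunctor (Cofork.IsColimit.π_desc' hUE (lensForget.map K) hKg)
  have hwget : DLens.get F1 ⋙ DLens.get E = DLens.get F2 ⋙ DLens.get E :=
    congrArg Cat.Hom.toFunctor wU
  have hKcomp : DLens.comp F1 K = DLens.comp F2 K := hK
  obtain ⟨fh, hfh⟩ := LensProof.factor_exists hUE
    (Σ X : C.toCat, (Out (H.obj X) → Out X))
    (LensProof.gfun E K H hfac)
    (fun a => LensProof.g_coeq E K H hfac F1 F2 hKcomp hwget a)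
  have hWD : ∀ (b b' : B.toCat), (DLens.get E).obj b = (DLens.get E).obj b' →
      LensProof.gfun E K H hfac b = LensProof.gfun E K H hfac b' := by
    intro b b' h
    rw [← hfh b, ← hfh b', h]
  refine ⟨LensProof.descLens E K H sec hsec hfac hWD, ?_, ?_⟩
  · show DLens.comp E (LensProof.descLens E K H sec hsec hfac hWD) = K
    exact LensProof.comp_descLens E K H sec hsec hfac hWD hdopf
  · intro m hm
    have hm' : DLens.comp E m = K := hm
    have hget : DLens.get m = H := by
      have hc : (DLens.get m).toCatHom = Cofork.IsColimit.desc hUE (lensForget.map K) hKg := by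
        refine Cofork.IsColimit.hom_ext hUE ?_
        refine Cat.ext ?_
        show DLens.get E ⋙ DLens.get m = DLens.get E ⋙ H
        calc DLens.get E ⋙ DLens.get m = DLens.get (DLens.comp E m) := rfl
          _ = DLens.get K := congrArg DLens.get hm'
          _ = DLens.get E ⋙ H := hfac.symm
      exact congrArg Cat.Hom.toFunctor hc
    exact LensProof.descLens_uniq E K H sec hsec hfac hWD m hget hm'
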